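/- Let Λ : ℂᵏ → ℂᵏ be a triangular dilating map, i.e., Λ(z) = (λ₁z₁, λ₂z₂ + P₂(z₁), …, λₖzₖ + Pₖ(z₁,…,z_{k−1})) with 1 < |λ₁| ≤ … ≤ |λₖ| and each Pᵢ a polynomial satisfying Pᵢ(λ₁z₁,…,λ_{i−1}z_{i−1}) = λᵢPᵢ(z₁,…,z_{i−1}). Then Λ is invertible, and for every z ∈ ℂᵏ, Λ^{−m}(z) → 0 as m → ∞. -/

import Mathlib

open Filter

/-- Auxiliary: the inverse of a triangular map, defined coordinate by coordinate. -/
noncomputable def triInvAux (k : ℕ) (lam : Fin k → ℂ) (P : ∀ i : Fin k, MvPolynomial (Fin i.val) ℂ)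
    (z : Fin k → ℂ) (n : ℕ) (h : n < k) : ℂ :=
  (lam ⟨n, h⟩)⁻¹ * (z ⟨n, h⟩ -
      MvPolynomial.eval (fun j : Fin n => triInvAux k lam P z j.val (j.isLt.trans h))
        (P ⟨n, h⟩))
  termination_by n

/-- Auxiliary: a sequence satisfying a contracting recurrence with vanishing error tends to 0. -/
lemma aux_rec_tendsto {c : ℝ} (hc0 : 0 ≤ c) (hc1 : c < 1) {a e : ℕ → ℝ}
    (ha : ∀ m, 0 ≤ a m) (hrec : ∀ m, a (m + 1) ≤ c * a m + e m)
    (he : Tendsto e atTop (nhds 0)) : Tendsto a atTop (nhds 0) := by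
  rw [Metric.tendsto_atTop] at he ⊢
  intro ε hε
  have hδ : 0 < (1 - c) * ε / 2 := by
    have : 0 < 1 - c := by linarith
    positivity
  obtain ⟨N, hN⟩ := he _ hδ
  have key : ∀ j, a (N + j) ≤ c ^ j * a N + ε / 2 := by
    intro j
    induction j with
    | zero =>
      simp only [Nat.add_zero, pow_zero, one_mul]
      linarith
    | succ j ih =>
      have heb : e (N + j) ≤ (1 - c) * ε / 2 := by
        have := hN (N + j) (Nat.le_add_right _ _)
        rw [Real.dist_eq, sub_zero] at this
        exact (le_abs_self _).trans this.le
      calc a (N + (j + 1)) = a ((N + j) + 1) := by ring_nf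
        _ ≤ c * a (N + j) + e (N + j) := hrec _
        _ ≤ c * (c ^ j * a N + ε / 2) + (1 - c) * ε / 2 := by
            have := mul_le_mul_of_nonneg_left ih hc0
            linarith
        _ = c ^ (j + 1) * a N + (c * ε / 2 + (1 - c) * ε / 2) := by ring
        _ = c ^ (j + 1) * a N + ε / 2 := by ring
  have hpow : Tendsto (fun j => c ^ j * a N) atTop (nhds 0) := by
    have := (tendsto_pow_atTop_nhds_zero_of_lt_one hc0 hc1).mul_const (a N)
    simpa using this
  rw [Metric.tendsto_atTop] at hpow
  obtain ⟨M, hM⟩ := hpow (ε / 2) (by linarith)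
  refine ⟨N + M, fun m hm => ?_⟩
  have hmN : N ≤ m := le_trans (Nat.le_add_right _ _) hm
  have h1 : a m ≤ c ^ (m - N) * a N + ε / 2 := by
    have := key (m - N)
    rwa [Nat.add_sub_cancel' hmN] at this
  have h2 : c ^ (m - N) * a N < ε / 2 := by
    have hMm : M ≤ m - N := by omega
    have := hM (m - N) hMm
    rw [Real.dist_eq, sub_zero] at this
    exact (le_abs_self _).trans_lt this
  rw [Real.dist_eq, sub_zero, abs_of_nonneg (ha m)]
  linarith

theorem stmt_3 (k : ℕ) (lam : Fin k → ℂ)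
    (P : ∀ i : Fin k, MvPolynomial (Fin i.val) ℂ)
    (hlam1 : ∀ i, 1 < ‖lam i‖)
    (hmono : ∀ i j : Fin k, i ≤ j → ‖lam i‖ ≤ ‖lam j‖)
    (hhom : ∀ i : Fin k, ∀ z : Fin k → ℂ,
      MvPolynomial.eval
          (fun j : Fin i.val => lam (Fin.castLE i.isLt.le j) * z (Fin.castLE i.isLt.le j))
          (P i)
        = lam i * MvPolynomial.eval (fun j : Fin i.val => z (Fin.castLE i.isLt.le j)) (P i))
    (Λ : (Fin k → ℂ) → (Fin k → ℂ))
    (hΛ : ∀ z i, Λ z i = lam i * z i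
        + MvPolynomial.eval (fun j : Fin i.val => z (Fin.castLE i.isLt.le j)) (P i)) :
    Function.Bijective Λ ∧ ∃ Λinv : (Fin k → ℂ) → (Fin k → ℂ),
      (∀ z, Λ (Λinv z) = z) ∧ (∀ z, Λinv (Λ z) = z) ∧
      ∀ z, Tendsto (fun m => Λinv^[m] z) atTop (nhds (0 : Fin k → ℂ)) := by
  have hlamne : ∀ i, lam i ≠ 0 := by
    intro i h
    have := hlam1 i
    rw [h, norm_zero] at this
    linarith
  set G : (Fin k → ℂ) → (Fin k → ℂ) := fun z i => triInvAux k lam P z i.val i.isLt with hG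
  have hunfold : ∀ z (i : Fin k), G z i = (lam i)⁻¹ * (z i -
      MvPolynomial.eval (fun j : Fin i.val => G z (Fin.castLE i.isLt.le j)) (P i)) := by
    intro z i
    show triInvAux k lam P z i.val i.isLt = _
    rw [triInvAux]
    rfl
  -- right inverse
  have hright : ∀ z, Λ (G z) = z := by
    intro z
    funext i
    rw [hΛ, hunfold]
    set E := MvPolynomial.eval (fun j : Fin i.val => G z (Fin.castLE i.isLt.le j)) (P i)
    field_simp [hlamne i]
    ring
  -- left inverse
  have hleft : ∀ z, G (Λ z) = z := by
    intro z
    have main : ∀ n (hn : n < k), G (Λ z) ⟨n, hn⟩ = z ⟨n, hn⟩ := by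
      intro n
      induction n using Nat.strong_induction_on with
      | _ n IH =>
        intro hn
        rw [hunfold, hΛ]
        have harg : (fun j : Fin (⟨n, hn⟩ : Fin k).val =>
            G (Λ z) (Fin.castLE (⟨n, hn⟩ : Fin k).isLt.le j))
            = fun j : Fin (⟨n, hn⟩ : Fin k).val =>
              z (Fin.castLE (⟨n, hn⟩ : Fin k).isLt.le j) := by
          funext j
          exact IH j.val j.isLt _
        rw [harg]
        field_simp [hlamne ⟨n, hn⟩]
        ring
    funext i
    exact main i.val i.isLt
  -- constant term of P i vanishes
  have heval0 : ∀ i : Fin k,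
      MvPolynomial.eval (fun _ : Fin i.val => (0 : ℂ)) (P i) = 0 := by
    intro i
    have h := hhom i 0
    simp only [Pi.zero_apply, mul_zero] at h
    have hne : lam i ≠ 1 := by
      intro h1
      have := hlam1 i
      rw [h1] at this
      simp at this
    have h2 : (1 - lam i) * MvPolynomial.eval (fun _ : Fin i.val => (0 : ℂ)) (P i) = 0 := by
      linear_combination h
    rcases mul_eq_zero.1 h2 with h3 | h3
    · exact absurd (by linear_combination -h3 : lam i = 1) hne
    · exact h3
  refine ⟨Function.bijective_iff_has_inverse.mpr ⟨G, fun z => hleft z, fun z => hright z⟩,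
    G, hright, hleft, ?_⟩
  intro z
  rw [tendsto_pi_nhds]
  suffices main : ∀ n (hn : n < k), Tendsto (fun m => G^[m] z ⟨n, hn⟩) atTop (nhds 0) by
    intro i
    simpa using main i.val i.isLt
  intro n
  induction n using Nat.strong_induction_on with
  | _ n IH =>
    intro hn
    set i : Fin k := ⟨n, hn⟩ with hi
    set W : ℕ → Fin k → ℂ := fun m => G^[m] z with hWdef
    have hW : ∀ m, W (m + 1) = G (W m) := fun m => Function.iterate_succ_apply' G m z
    set ε : ℕ → ℂ := fun m =>
      MvPolynomial.eval (fun j : Fin i.val => W (m + 1) (Fin.castLE i.isLt.le j)) (P i)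
      with hε
    have hεlim : Tendsto ε atTop (nhds 0) := by
      have hcont : Continuous (fun v : Fin i.val → ℂ => MvPolynomial.eval v (P i)) :=
        MvPolynomial.continuous_eval (P i)
      have hv : Tendsto (fun m => fun j : Fin i.val => W (m + 1) (Fin.castLE i.isLt.le j))
          atTop (nhds 0) := by
        rw [tendsto_pi_nhds]
        intro j
        have hjk : (j.val : ℕ) < k := j.isLt.trans hn
        have h1 := IH j.val j.isLt hjk
        have h2 : Tendsto (fun m => G^[m + 1] z ⟨j.val, hjk⟩) atTop (nhds 0) :=
          h1.comp (tendsto_add_atTop_nat 1)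
        exact h2
      have h0 := hcont.tendsto 0
      rw [show MvPolynomial.eval (0 : Fin i.val → ℂ) (P i) = 0 from heval0 i] at h0
      exact h0.comp hv
    have hrec : ∀ m, ‖W (m + 1) i‖ ≤ ‖lam i‖⁻¹ * ‖W m i‖ + ‖lam i‖⁻¹ * ‖ε m‖ := by
      intro m
      have h1 : W (m + 1) i = (lam i)⁻¹ * (W m i - ε m) := by
        have h := hunfold (W m) i
        rw [← hW m] at h
        exact h
      rw [h1]
      calc ‖(lam i)⁻¹ * (W m i - ε m)‖ = ‖lam i‖⁻¹ * ‖W m i - ε m‖ := by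
            rw [norm_mul, norm_inv]
        _ ≤ ‖lam i‖⁻¹ * (‖W m i‖ + ‖ε m‖) := by
            gcongr
            exact norm_sub_le _ _
        _ = ‖lam i‖⁻¹ * ‖W m i‖ + ‖lam i‖⁻¹ * ‖ε m‖ := by ring
    have hc0 : (0 : ℝ) ≤ ‖lam i‖⁻¹ := by positivity
    have hc1 : ‖lam i‖⁻¹ < 1 := inv_lt_one_of_one_lt₀ (hlam1 i)
    have helim : Tendsto (fun m => ‖lam i‖⁻¹ * ‖ε m‖) atTop (nhds 0) := by
      have := (hεlim.norm).const_mul (‖lam i‖⁻¹)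
      simpa using this
    have hnorm : Tendsto (fun m => ‖W m i‖) atTop (nhds 0) :=
      aux_rec_tendsto hc0 hc1 (fun m => norm_nonneg _) hrec helim
    exact tendsto_zero_iff_norm_tendsto_zero.2 hnorm
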